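/- Suppose e : ℕ × ℕ → ℤ satisfies e(1, n) = 1 for all n ≥ 1, and for all 2 ≤ s ≤ n the recurrence e(s,n) = ∑_{i=2}^{s} (χ̄(i,n) - χ̄(i-1,n)) * e(s-i+1, n-i+1), where χ̄(i,n) = (-1)^i * C(n-1, i-1) and χ̄(1,n) = -1. Then e(s,n) = C(n, s-1) for all 1 ≤ s ≤ n. -/

import Mathlib

/-- `χ̄(i,n) = (-1)^i * C(n-1, i-1)`; note `χ̄(1,n) = -1`. -/
noncomputable def chiBar (i n : ℕ) : ℤ := (-1 : ℤ) ^ i * ((n - 1).choose (i - 1))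

lemma chiBar_diff {i n : ℕ} (hi : 2 ≤ i) (hn : 1 ≤ n) :
    chiBar i n - chiBar (i - 1) n = (-1 : ℤ) ^ i * (n.choose (i - 1)) := by
  obtain ⟨j, rfl⟩ : ∃ j, i = j + 2 := ⟨i - 2, by omega⟩
  obtain ⟨m, rfl⟩ : ∃ m, n = m + 1 := ⟨n - 1, by omega⟩
  simp only [chiBar]
  have h1 : j + 2 - 1 = j + 1 := rfl
  have h2 : m + 1 - 1 = m := rfl
  rw [h1, h2]
  have h3 : (j + 1) - 1 = j := rfl
  rw [h3]
  have : (m + 1).choose (j + 1) = m.choose j + m.choose (j + 1) := Nat.choose_succ_succ m j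
  rw [this]
  push_cast
  ring

lemma alt_sum (m : ℕ) (hm : 1 ≤ m) :
    ∑ j ∈ Finset.Icc 1 m, (-1 : ℤ) ^ (j + 1) * (m.choose j) = 1 := by
  have h := Int.alternating_sum_range_choose_of_ne (n := m) (by omega)
  rw [Finset.range_eq_Ico, Finset.sum_eq_sum_Ico_succ_bot (by omega)] at h
  simp only [pow_zero, Nat.choose_zero_right, Nat.cast_one, one_mul] at h
  have h' : ∑ j ∈ Finset.Ico 1 (m + 1), (-1 : ℤ) ^ j * (m.choose j) = -1 := by linarith
  calc ∑ j ∈ Finset.Icc 1 m, (-1 : ℤ) ^ (j + 1) * (m.choose j)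
      = -∑ j ∈ Finset.Ico 1 (m + 1), (-1 : ℤ) ^ j * (m.choose j) := by
        rw [← Finset.sum_neg_distrib, Finset.Ico_add_one_right_eq_Icc]
        exact Finset.sum_congr rfl fun j _ => by ring
    _ = 1 := by rw [h']; ring

lemma key (s n : ℕ) (h2 : 2 ≤ s) (hsn : s ≤ n) :
    ∑ i ∈ Finset.Icc 2 s, (-1 : ℤ) ^ i * (n.choose (i - 1)) * ((n - i + 1).choose (s - i))
      = n.choose (s - 1) := by
  set m := s - 1 with hm
  have hms : s = m + 1 := by omega
  have step1 : ∑ i ∈ Finset.Icc 2 s, (-1 : ℤ) ^ i * (n.choose (i - 1)) * ((n - i + 1).choose (s - i))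
      = ∑ j ∈ Finset.Icc 1 m, (-1 : ℤ) ^ (j + 1) * (n.choose j) * ((n - j).choose (m - j)) := by
    rw [show Finset.Icc 2 s = (Finset.Icc 1 m).map (addRightEmbedding 1) by
      rw [Finset.map_add_right_Icc, ← hms]]
    rw [Finset.sum_map]
    refine Finset.sum_congr rfl fun j hj => ?_
    simp only [addRightEmbedding_apply]
    have hj1 : 1 ≤ j := (Finset.mem_Icc.mp hj).1
    have hj2 : j ≤ m := (Finset.mem_Icc.mp hj).2
    have e1 : j + 1 - 1 = j := by omega
    have e2 : n - (j + 1) + 1 = n - j := by omega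
    have e3 : s - (j + 1) = m - j := by omega
    rw [e1, e2, e3]
  rw [step1]
  have step2 : ∀ j ∈ Finset.Icc 1 m,
      (-1 : ℤ) ^ (j + 1) * (n.choose j) * ((n - j).choose (m - j))
        = (n.choose m : ℤ) * ((-1 : ℤ) ^ (j + 1) * (m.choose j)) := by
    intro j hj
    have hj2 : j ≤ m := (Finset.mem_Icc.mp hj).2
    have hc : n.choose m * m.choose j = n.choose j * (n - j).choose (m - j) :=
      Nat.choose_mul hj2
    have : ((n.choose m : ℤ)) * (m.choose j) = (n.choose j : ℤ) * ((n - j).choose (m - j)) := by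
      exact_mod_cast congrArg (Nat.cast : ℕ → ℤ) hc
    calc (-1 : ℤ) ^ (j + 1) * (n.choose j) * ((n - j).choose (m - j))
        = (-1 : ℤ) ^ (j + 1) * ((n.choose j : ℤ) * ((n - j).choose (m - j))) := by ring
      _ = (-1 : ℤ) ^ (j + 1) * ((n.choose m : ℤ) * (m.choose j)) := by rw [← this]
      _ = (n.choose m : ℤ) * ((-1 : ℤ) ^ (j + 1) * (m.choose j)) := by ring
  rw [Finset.sum_congr rfl step2, ← Finset.mul_sum, alt_sum m (by omega), mul_one]

theorem stmt3 (e : ℕ × ℕ → ℤ)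
    (h1 : ∀ n : ℕ, 1 ≤ n → e (1, n) = 1)
    (hrec : ∀ s n : ℕ, 2 ≤ s → s ≤ n →
      e (s, n) = ∑ i ∈ Finset.Icc 2 s,
        (chiBar i n - chiBar (i - 1) n) * e (s - i + 1, n - i + 1)) :
    ∀ s n : ℕ, 1 ≤ s → s ≤ n → e (s, n) = n.choose (s - 1) := by
  intro s
  induction s using Nat.strong_induction_on with
  | _ s ih =>
    intro n hs hsn
    rcases eq_or_lt_of_le hs with h | h
    · rw [← h] at *
      simp [h1 n (by omega)]
    · have h2 : 2 ≤ s := h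
      rw [hrec s n h2 hsn]
      have : ∀ i ∈ Finset.Icc 2 s,
          (chiBar i n - chiBar (i - 1) n) * e (s - i + 1, n - i + 1)
            = (-1 : ℤ) ^ i * (n.choose (i - 1)) * ((n - i + 1).choose (s - i)) := by
        intro i hi
        obtain ⟨hi1, hi2⟩ := Finset.mem_Icc.mp hi
        rw [chiBar_diff hi1 (by omega),
          ih (s - i + 1) (by omega) (n - i + 1) (by omega) (by omega)]
        have : s - i + 1 - 1 = s - i := by omega
        rw [this, mul_assoc]
      rw [Finset.sum_congr rfl this, key s n h2 hsn]
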